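/- Let u¹, …, u^m ∈ ℝ^n with m < n, and let U ∈ ℝ^{n×m} be the matrix whose columns are u¹, …, u^m. The following two conditions are equivalent: (1) for any real numbers c₁, …, c_m that are not all zero, s^+(Σ_{i=1}^m c_i u^i) ≤ m − 1; (2) all m×m minors of U are nonzero and have the same sign (U is strictly sign-regular of order m, SSR_m). -/

import Mathlib

/-- Number of sign changes in a list of reals: the number of adjacent pairs
with strictly negative product. -/
noncomputable def signChanges : List ℝ → ℕ
  | a :: b :: l => (if a * b < 0 then 1 else 0) + signChanges (b :: l)
  | _ => 0

/-- `s⁻` of a list: sign changes after deleting all zero entries. -/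
noncomputable def sMinusList (l : List ℝ) : ℕ :=
  signChanges (l.filter (fun a => decide (a ≠ 0)))

/-- `s⁻(x)`: the number of sign changes in `x` after deleting all zero entries. -/
noncomputable def sMinus {n : ℕ} (x : Fin n → ℝ) : ℕ :=
  sMinusList (List.ofFn x)

/-- Replace each zero entry of `x` by `1` or `-1` according to `ε`. -/
noncomputable def replZeros {n : ℕ} (x : Fin n → ℝ) (ε : Fin n → Bool) : Fin n → ℝ :=
  fun i => if x i = 0 then (if ε i then 1 else -1) else x i

/-- `s⁺(x)`: the maximal number of sign changes over all replacements of the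
zero entries of `x` by `±1`. -/
noncomputable def sPlus {n : ℕ} (x : Fin n → ℝ) : ℕ :=
  Finset.univ.sup fun ε : Fin n → Bool => signChanges (List.ofFn (replZeros x ε))

/-- The cyclically rotated vector `[x i, …, x (n-1), x 0, …, x i]` (of length `n+1`),
as a list. -/
noncomputable def rotList {n : ℕ} (x : Fin n → ℝ) (i : Fin n) : List ℝ :=
  (List.ofFn x).rotate i.val ++ [x i]

/-- The cyclic sign variation count `s_c⁻(x)`: the maximum of `s⁻` over all
cyclic rotations `[x i, …, x (n-1), x 0, …, x i]`. -/
noncomputable def sMinusC {n : ℕ} (x : Fin n → ℝ) : ℕ :=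
  Finset.univ.sup fun i : Fin n => sMinusList (rotList x i)

/-- The cyclic sign variation count `s_c⁺(x)`: the maximum of `s⁺` over all
cyclic rotations, where the two copies of the entry `x i` at the two ends of a
rotation are replaced by the same sign. -/
noncomputable def sPlusC {n : ℕ} (x : Fin n → ℝ) : ℕ :=
  Finset.univ.sup fun p : (Fin n → Bool) × Fin n =>
    signChanges (rotList (replZeros x p.1) p.2)

/-- `A` is strictly sign-regular of order `k` (`SSR_k`): all `k×k` minors are
nonzero and have the same sign. -/
def SSRof {n m : ℕ} (A : Matrix (Fin n) (Fin m) ℝ) (k : ℕ) : Prop :=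
  (∀ (α : Fin k → Fin n) (β : Fin k → Fin m), StrictMono α → StrictMono β →
      0 < (A.submatrix α β).det) ∨
  (∀ (α : Fin k → Fin n) (β : Fin k → Fin m), StrictMono α → StrictMono β →
      (A.submatrix α β).det < 0)

/-- `A` is sign-regular of order `k` (`SR_k`): all `k×k` minors have the same
non-strict sign. -/
def SRof {n m : ℕ} (A : Matrix (Fin n) (Fin m) ℝ) (k : ℕ) : Prop :=
  (∀ (α : Fin k → Fin n) (β : Fin k → Fin m), StrictMono α → StrictMono β →
      0 ≤ (A.submatrix α β).det) ∨
  (∀ (α : Fin k → Fin n) (β : Fin k → Fin m), StrictMono α → StrictMono β →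
      (A.submatrix α β).det ≤ 0)

/-- A square matrix is Metzler if all its off-diagonal entries are nonnegative. -/
def IsMetzler {n : ℕ} (A : Matrix (Fin n) (Fin n) ℝ) : Prop :=
  ∀ i j : Fin n, i ≠ j → 0 ≤ A i j

/-- A square matrix is irreducible if the directed graph with an edge from `i`
to `j` whenever `i ≠ j` and `A i j ≠ 0` is strongly connected. -/
def IsIrreducibleMatrix {n : ℕ} (A : Matrix (Fin n) (Fin n) ℝ) : Prop :=
  ∀ i j : Fin n, i ≠ j → Relation.TransGen (fun p q : Fin n => p ≠ q ∧ A p q ≠ 0) i j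

/-- Membership in `Q`: Metzler, and the nonzero entries lie only on the main
diagonal, the super- and sub-diagonals, and the corner positions `(1,n)`, `(n,1)`
(in 0-indexed form: `(0, n-1)` and `(n-1, 0)`). -/
def memQ {n : ℕ} (A : Matrix (Fin n) (Fin n) ℝ) : Prop :=
  IsMetzler A ∧ ∀ i j : Fin n, A i j ≠ 0 →
    ((i : ℕ) = (j : ℕ) ∨ (j : ℕ) = (i : ℕ) + 1 ∨ (i : ℕ) = (j : ℕ) + 1 ∨
      ((i : ℕ) = 0 ∧ (j : ℕ) = n - 1) ∨ ((i : ℕ) = n - 1 ∧ (j : ℕ) = 0))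

/-- Membership in `Q⁺`: in `Q` and irreducible. -/
def memQplus {n : ℕ} (A : Matrix (Fin n) (Fin n) ℝ) : Prop :=
  memQ A ∧ IsIrreducibleMatrix A

/-- `P` is the permutation matrix of a cyclic shift `j ↦ j + k (mod n)`. -/
def IsCyclicPermMatrix {n : ℕ} (P : Matrix (Fin n) (Fin n) ℝ) : Prop :=
  ∃ k : ℕ, ∀ i j : Fin n, P i j = if (j : ℕ) % n = ((i : ℕ) + k) % n then 1 else 0

lemma signChanges_nil : signChanges [] = 0 := rfl
lemma signChanges_singleton (a : ℝ) : signChanges [a] = 0 := rfl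
lemma signChanges_cons_cons (a b : ℝ) (l : List ℝ) :
    signChanges (a :: b :: l) = (if a * b < 0 then 1 else 0) + signChanges (b :: l) := rfl

lemma signChanges_le_cons (a : ℝ) (l : List ℝ) : signChanges l ≤ signChanges (a :: l) := by
  cases l with
  | nil => simp [signChanges]
  | cons b t => rw [signChanges_cons_cons]; omega

lemma signChanges_cons_le_one_add (x a : ℝ) (l : List ℝ) :
    signChanges (x :: l) ≤ 1 + signChanges (a :: l) := by
  cases l with
  | nil => simp [signChanges]
  | cons b t => rw [signChanges_cons_cons, signChanges_cons_cons]; split_ifs <;> omega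

lemma sign_transfer {a x b : ℝ} (hax : 0 < a * x) (h : a * b < 0) : x * b < 0 := by
  rcases mul_pos_iff.mp hax with ⟨ha, hx⟩ | ⟨ha, hx⟩
  · have hb : b < 0 := by nlinarith
    exact mul_neg_of_pos_of_neg hx hb
  · have hb : 0 < b := by nlinarith
    exact mul_neg_of_neg_of_pos hx hb

lemma signChanges_sublist_cons {l₁ l₂ : List ℝ} (h : List.Sublist l₁ l₂) (h₂ : ∀ a ∈ l₂, a ≠ 0) :
    ∀ x : ℝ, x ≠ 0 → signChanges (x :: l₁) ≤ signChanges (x :: l₂) := by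
  induction h with
  | slnil => intro x _; exact le_refl _
  | @cons l₁ l₂ a h ih =>
    intro x hx
    have ha : a ≠ 0 := h₂ a (List.mem_cons_self)
    have h₂' : ∀ b ∈ l₂, b ≠ 0 := fun b hb => h₂ b (List.mem_cons_of_mem a hb)
    by_cases hxa : x * a < 0
    · calc signChanges (x :: l₁) ≤ 1 + signChanges (a :: l₁) :=
            signChanges_cons_le_one_add x a l₁
        _ ≤ 1 + signChanges (a :: l₂) := by
            have := ih h₂' a ha; omega
        _ = signChanges (x :: a :: l₂) := by rw [signChanges_cons_cons, if_pos hxa]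
    · have hxa' : 0 < x * a := lt_of_le_of_ne (not_lt.mp hxa)
        (fun hh => hx (by rcases mul_eq_zero.mp hh.symm with h | h; exact h; exact absurd h ha))
      calc signChanges (x :: l₁) ≤ signChanges (x :: l₂) := ih h₂' x hx
        _ = signChanges (a :: l₂) := by
            cases l₂ with
            | nil => rfl
            | cons b t =>
              rw [signChanges_cons_cons, signChanges_cons_cons]
              congr 1
              by_cases hxb : x * b < 0
              · rw [if_pos hxb, if_pos (sign_transfer hxa' hxb)]
              · rw [if_neg hxb, if_neg]
                intro hab
                exact hxb (sign_transfer (by nlinarith) hab)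
        _ = signChanges (x :: a :: l₂) := by
            rw [signChanges_cons_cons, if_neg (by push_neg; nlinarith)]
            omega
  | @cons_cons l₁ l₂ a h ih =>
    intro x hx
    have ha : a ≠ 0 := h₂ a (List.mem_cons_self)
    have h₂' : ∀ b ∈ l₂, b ≠ 0 := fun b hb => h₂ b (List.mem_cons_of_mem a hb)
    rw [signChanges_cons_cons, signChanges_cons_cons]
    have := ih h₂' a ha
    omega

lemma signChanges_sublist {l₁ l₂ : List ℝ} (h : List.Sublist l₁ l₂) (h₂ : ∀ a ∈ l₂, a ≠ 0) :
    signChanges l₁ ≤ signChanges l₂ := by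
  induction h with
  | slnil => exact le_refl _
  | @cons l₁ l₂ a h ih =>
    have h₂' : ∀ b ∈ l₂, b ≠ 0 := fun b hb => h₂ b (List.mem_cons_of_mem a hb)
    exact (ih h₂').trans (signChanges_le_cons a l₂)
  | @cons_cons l₁ l₂ a h ih =>
    have ha : a ≠ 0 := h₂ a (List.mem_cons_self)
    have h₂' : ∀ b ∈ l₂, b ≠ 0 := fun b hb => h₂ b (List.mem_cons_of_mem a hb)
    exact signChanges_sublist_cons h h₂' a ha

lemma signChanges_chain' : ∀ {l : List ℝ}, l.Chain' (fun a b => a * b < 0) →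
    signChanges l = l.length - 1
  | [], _ => rfl
  | [a], _ => rfl
  | a :: b :: t, h => by
    rw [signChanges_cons_cons, if_pos (List.isChain_cons_cons.mp h).1,
      signChanges_chain' (List.isChain_cons_cons.mp h).2]
    simp
    omega

lemma exists_alt_sublist : ∀ {l : List ℝ}, l ≠ [] → (∀ a ∈ l, a ≠ 0) →
    ∃ l' : List ℝ, List.Sublist l' l ∧ l'.length = signChanges l + 1 ∧
      l'.Chain' (fun a b => a * b < 0) ∧ l'.head? = l.head?
  | [], hl, _ => absurd rfl hl
  | [a], _, _ => ⟨[a], List.Sublist.refl _, rfl, List.isChain_singleton a, rfl⟩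
  | a :: b :: t, _, h0 => by
    have ha : a ≠ 0 := h0 a (by simp)
    have hb : b ≠ 0 := h0 b (by simp)
    obtain ⟨l'', hsub, hlen, hchain, hhead⟩ :=
      exists_alt_sublist (l := b :: t) (by simp) (fun x hx => h0 x (by simp [hx]))
    obtain ⟨rest, rfl⟩ : ∃ rest, l'' = b :: rest := by
      cases l'' with
      | nil => simp at hlen
      | cons c r =>
        have hcb : c = b := by simpa using hhead
        exact ⟨r, by rw [hcb]⟩
    by_cases hab : a * b < 0
    · refine ⟨a :: b :: rest, List.Sublist.cons₂ a hsub, ?_, ?_, rfl⟩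
      · simp at hlen ⊢
        rw [signChanges_cons_cons, if_pos hab]
        omega
      · exact List.isChain_cons_cons.mpr ⟨hab, hchain⟩
    · have hab' : 0 < a * b := lt_of_le_of_ne (not_lt.mp hab)
        (fun hh => ha (by rcases mul_eq_zero.mp hh.symm with h | h; exact h; exact absurd h hb))
      have hrest : List.Sublist rest (b :: t) :=
        ((List.sublist_cons_self b rest).trans hsub)
      refine ⟨a :: rest, List.Sublist.cons₂ a hrest, ?_, ?_, rfl⟩
      · simp at hlen ⊢
        rw [signChanges_cons_cons, if_neg hab]
        omega
      · cases rest with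
        | nil => exact List.isChain_singleton a
        | cons c r =>
          refine List.isChain_cons_cons.mpr ⟨?_, (List.isChain_cons_cons.mp hchain).2⟩
          have hbc : b * c < 0 := (List.isChain_cons_cons.mp hchain).1
          exact sign_transfer (mul_comm a b ▸ hab') hbc

lemma replZeros_ne_zero {n : ℕ} (x : Fin n → ℝ) (ε : Fin n → Bool) (i : Fin n) :
    replZeros x ε i ≠ 0 := by
  unfold replZeros
  split_ifs <;> norm_num
  assumption

lemma exists_alt_indices {n m : ℕ} (y : Fin n → ℝ) (h0 : ∀ i, y i ≠ 0)
    (h : m + 1 ≤ signChanges (List.ofFn y)) :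
    ∃ t : Fin (m + 2) → Fin n, StrictMono t ∧
      ∀ j : Fin (m + 1), y (t j.castSucc) * y (t j.succ) < 0 := by
  have hne : List.ofFn y ≠ [] := by
    intro hnil
    rw [hnil] at h
    simp [signChanges] at h
  obtain ⟨l', hsub, hlen, hchain, -⟩ := exists_alt_sublist hne
    (fun a ha => by obtain ⟨i, rfl⟩ := List.mem_ofFn.mp ha; exact h0 i)
  set l'' := l'.take (m + 2) with hl''
  have hsub'' : List.Sublist l'' (List.ofFn y) := (List.take_sublist _ _).trans hsub
  have hlen'' : l''.length = m + 2 := by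
    rw [hl'', List.length_take, hlen]
    omega
  have hchain'' : l''.Chain' (fun a b => a * b < 0) := hchain.take _
  obtain ⟨f, hf⟩ := List.sublist_iff_exists_fin_orderEmbedding_get_eq.mp hsub''
  refine ⟨fun j => Fin.cast (List.length_ofFn (f := y)) (f (Fin.cast hlen''.symm j)), ?_, ?_⟩
  · exact (Fin.cast_strictMono _).comp (f.strictMono.comp (Fin.cast_strictMono _))
  · intro j
    have hc := List.isChain_iff_getElem.mp hchain'' (j : ℕ) (by rw [hlen'']; omega)
    have e1 : l''.get ⟨(j : ℕ), by rw [hlen'']; omega⟩ =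
        y (Fin.cast (List.length_ofFn (f := y)) (f (Fin.cast hlen''.symm j.castSucc))) := by
      rw [show (Fin.cast hlen''.symm j.castSucc) = ⟨(j : ℕ), by rw [hlen'']; omega⟩ from rfl]
      rw [hf]
      rw [List.get_ofFn]
    have e2 : l''.get ⟨(j : ℕ) + 1, by rw [hlen'']; omega⟩ =
        y (Fin.cast (List.length_ofFn (f := y)) (f (Fin.cast hlen''.symm j.succ))) := by
      rw [show (Fin.cast hlen''.symm j.succ) = ⟨(j : ℕ) + 1, by rw [hlen'']; omega⟩ from rfl]
      rw [hf]
      rw [List.get_ofFn]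
    simp only [List.get_eq_getElem] at e1 e2
    rw [e1, e2] at hc
    exact hc

lemma signChanges_ofFn_comp_ge {n k : ℕ} (y : Fin n → ℝ) (h0 : ∀ i, y i ≠ 0)
    (t : Fin (k + 1) → Fin n) (ht : StrictMono t)
    (halt : ∀ j : Fin k, y (t j.castSucc) * y (t j.succ) < 0) :
    k ≤ signChanges (List.ofFn y) := by
  set L := List.ofFn (y ∘ t) with hL
  have hlenL : L.length = k + 1 := by simp [hL]
  have hsub : List.Sublist L (List.ofFn y) := by
    apply List.sublist_iff_exists_fin_orderEmbedding_get_eq.mpr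
    refine ⟨OrderEmbedding.ofStrictMono
      (fun i => Fin.cast (List.length_ofFn (f := y)).symm (t (Fin.cast (by simp [hL]) i))) ?_, ?_⟩
    · exact (Fin.cast_strictMono _).comp (ht.comp (Fin.cast_strictMono _))
    · intro ix
      rw [List.get_ofFn, OrderEmbedding.coe_ofStrictMono]
      rw [List.get_ofFn]
      rfl
  have hchain : L.Chain' (fun a b => a * b < 0) := by
    apply List.isChain_iff_getElem.mpr
    intro i hi
    rw [hlenL] at hi
    simp only [Nat.add_lt_add_iff_right] at hi
    have := halt ⟨i, hi⟩
    rw [List.getElem_ofFn, List.getElem_ofFn]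
    convert this using 3 <;> rfl
  have : signChanges L = k := by rw [signChanges_chain' hchain, hlenL]; omega
  calc k = signChanges L := this.symm
    _ ≤ signChanges (List.ofFn y) := signChanges_sublist hsub
        (fun a ha => by obtain ⟨i, rfl⟩ := List.mem_ofFn.mp ha; exact h0 i)

lemma gadget {n k : ℕ} (x : Fin n → ℝ) (t : Fin (k + 1) → Fin n) (ht : StrictMono t)
    (σ : ℝ) (hσ : σ = 1 ∨ σ = -1)
    (h : ∀ j : Fin (k + 1), x (t j) = 0 ∨ 0 < (-1) ^ (j : ℕ) * σ * x (t j)) :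
    k ≤ sPlus x := by
  classical
  set ε : Fin n → Bool := fun i =>
    if h' : ∃ j, t j = i then decide (0 < (-1 : ℝ) ^ ((h'.choose : Fin (k+1)) : ℕ) * σ)
    else true with hε
  set y := replZeros x ε with hy
  have claim : ∀ j : Fin (k + 1), 0 < (-1) ^ (j : ℕ) * σ * y (t j) := by
    intro j
    have hp : (-1 : ℝ) ^ (j : ℕ) * σ = 1 ∨ (-1 : ℝ) ^ (j : ℕ) * σ = -1 := by
      rcases neg_one_pow_eq_or ℝ (j : ℕ) with ha | ha <;> rcases hσ with hs | hs <;>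
        rw [ha, hs] <;> norm_num
    by_cases hx : x (t j) = 0
    · have hex : ∃ j', t j' = t j := ⟨j, rfl⟩
      have hch : hex.choose = j := ht.injective hex.choose_spec
      have hεv : ε (t j) = decide (0 < (-1 : ℝ) ^ (j : ℕ) * σ) := by
        rw [hε]
        simp only [dif_pos hex, hch]
      have hyv : y (t j) = if ε (t j) then 1 else -1 := by
        rw [hy]; unfold replZeros; rw [if_pos hx]
      rcases hp with hp | hp
      · rw [hyv, hεv, hp]; norm_num
      · rw [hyv, hεv, hp]; norm_num
    · have hyv : y (t j) = x (t j) := by rw [hy]; unfold replZeros; rw [if_neg hx]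
      rw [hyv]
      rcases h j with h' | h'
      · exact absurd h' hx
      · exact h'
  have halt : ∀ j : Fin k, y (t j.castSucc) * y (t j.succ) < 0 := by
    intro j
    have A := claim j.castSucc
    have B := claim j.succ
    rw [Fin.coe_castSucc] at A
    rw [Fin.val_succ, pow_succ] at B
    rcases neg_one_pow_eq_or ℝ (j : ℕ) with ha | ha <;> rcases hσ with hs | hs <;>
      rw [ha, hs] at A B <;> nlinarith
  have h0 : ∀ i, y i ≠ 0 := replZeros_ne_zero x ε
  calc k ≤ signChanges (List.ofFn y) := signChanges_ofFn_comp_ge y h0 t ht halt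
    _ ≤ sPlus x :=
      Finset.le_sup (f := fun ε : Fin n → Bool => signChanges (List.ofFn (replZeros x ε)))
        (Finset.mem_univ ε)

lemma eq_zero_of_mulVec_eq_zero {m : ℕ} {V : Matrix (Fin m) (Fin m) ℝ} (hdet : V.det ≠ 0)
    {c : Fin m → ℝ} (h : V.mulVec c = 0) : c = 0 := by
  by_contra hc
  exact hdet (Matrix.exists_mulVec_eq_zero_iff.mp ⟨c, hc, h⟩)

lemma strictMono_fin_eq_id {m : ℕ} {f : Fin m → Fin m} (hf : StrictMono f) : f = id := by
  apply (StrictMono.range_inj hf strictMono_id).mp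
  rw [Set.range_id]
  exact Set.range_eq_univ.mpr (Finite.surjective_of_injective hf.injective)

lemma det_identity {n m : ℕ} (u : Fin m → Fin n → ℝ) (c : Fin m → ℝ)
    (τ : Fin (m + 1) → Fin n) :
    ∑ j : Fin (m + 1), (-1) ^ (j : ℕ) * (∑ i, c i * u i (τ j)) *
      ((Matrix.of fun i k => u k i).submatrix (fun i => τ (j.succAbove i)) id).det = 0 := by
  set W : Matrix (Fin (m + 1)) (Fin (m + 1)) ℝ :=
    Matrix.of fun j k => Fin.cases (∑ i, c i * u i (τ j)) (fun k' => u k' (τ j)) k with hW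
  have hdet : W.det = 0 := by
    apply Matrix.exists_mulVec_eq_zero_iff.mp
    refine ⟨Fin.cons 1 (fun i => -c i), ?_, ?_⟩
    · intro hcon
      have := congrFun hcon 0
      simp at this
    · funext j
      simp only [Matrix.mulVec, dotProduct, Fin.sum_univ_succ, Fin.cons_zero, Fin.cons_succ,
        hW, Matrix.of_apply, Fin.cases_zero, Fin.cases_succ, Pi.zero_apply]
      have : ∑ i, u i (τ j) * -c i = -∑ i, c i * u i (τ j) := by
        rw [← Finset.sum_neg_distrib]
        exact Finset.sum_congr rfl fun i _ => by ring
      rw [mul_one, this]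
      ring
  calc ∑ j : Fin (m + 1), (-1) ^ (j : ℕ) * (∑ i, c i * u i (τ j)) *
        ((Matrix.of fun i k => u k i).submatrix (fun i => τ (j.succAbove i)) id).det
      = ∑ j : Fin (m + 1), (-1) ^ (j : ℕ) * W j 0 * (W.submatrix j.succAbove Fin.succ).det := by
        refine Finset.sum_congr rfl fun j _ => ?_
        have h1 : W j 0 = ∑ i, c i * u i (τ j) := by simp [hW]
        have h2 : W.submatrix j.succAbove Fin.succ =
            (Matrix.of fun i k => u k i).submatrix (fun i => τ (j.succAbove i)) id := by
          ext i k
          simp [hW]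
        rw [h1, h2]
    _ = W.det := (Matrix.det_succ_column_zero W).symm
    _ = 0 := hdet

lemma backward_lemma {n m : ℕ} (u : Fin (m + 1) → Fin n → ℝ)
    (e : ℝ) (he : e = 1 ∨ e = -1)
    (hminor : ∀ α : Fin (m + 1) → Fin n, StrictMono α →
      0 < e * ((Matrix.of fun i k => u k i).submatrix α id).det)
    (c : Fin (m + 1) → ℝ) (hc : c ≠ 0) : sPlus (∑ i, c i • u i) ≤ m := by
  set x := ∑ i, c i • u i with hx
  have hxval : ∀ p : Fin n, x p = ∑ i, c i * u i p := by
    intro p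
    rw [hx]
    simp [Finset.sum_apply]
  apply Finset.sup_le
  intro ε _
  by_contra hcon
  push_neg at hcon
  set y := replZeros x ε with hy
  have hy0 : ∀ i, y i ≠ 0 := replZeros_ne_zero x ε
  obtain ⟨t, ht, halt⟩ := exists_alt_indices (m := m) y hy0 (by omega)
  set s : ℝ := if 0 < y (t 0) then 1 else -1 with hs
  have hs' : s = 1 ∨ s = -1 := by rw [hs]; split_ifs <;> simp
  have hclaim : ∀ j : Fin (m + 2), 0 < (-1) ^ (j : ℕ) * s * y (t j) := by
    intro j
    induction j using Fin.induction with
    | zero =>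
      simp only [Fin.val_zero, pow_zero, one_mul]
      by_cases h0 : 0 < y (t 0)
      · rw [hs, if_pos h0]
        linarith
      · have hneg : y (t 0) < 0 := lt_of_le_of_ne (not_lt.mp h0) (hy0 (t 0))
        rw [hs, if_neg h0]
        nlinarith
    | succ j ih =>
      have hprod := halt j
      rw [Fin.coe_castSucc] at ih
      rw [Fin.val_succ, pow_succ]
      rcases neg_one_pow_eq_or ℝ (j : ℕ) with ha | ha <;> rcases hs' with hss | hss <;>
        rw [ha, hss] at ih ⊢ <;> nlinarith
  have hxn : ∀ j : Fin (m + 2), 0 ≤ (-1) ^ (j : ℕ) * s * x (t j) := by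
    intro j
    by_cases hx0 : x (t j) = 0
    · rw [hx0]; simp
    · have : y (t j) = x (t j) := by rw [hy]; unfold replZeros; rw [if_neg hx0]
      exact le_of_lt (this ▸ hclaim j)
  set D : Fin (m + 2) → ℝ := fun j =>
    ((Matrix.of fun i k => u k i).submatrix (fun i => t (j.succAbove i)) id).det with hD
  have hDpos : ∀ j, 0 < e * D j := fun j =>
    hminor _ (ht.comp (Fin.strictMono_succAbove j))
  have hsum0 : ∑ j : Fin (m + 2), ((-1) ^ (j : ℕ) * s * x (t j)) * (e * D j) = 0 := by
    have h1 : ∑ j : Fin (m + 2), ((-1) ^ (j : ℕ) * s * x (t j)) * (e * D j) =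
        (s * e) * ∑ j : Fin (m + 2), (-1) ^ (j : ℕ) * (∑ i, c i * u i (t j)) * D j := by
      rw [Finset.mul_sum]
      refine Finset.sum_congr rfl fun j _ => ?_
      rw [hxval]
      ring
    rw [h1, det_identity u c t, mul_zero]
  have hterm : ∀ j : Fin (m + 2), x (t j) = 0 := by
    intro j
    have h0 := (Finset.sum_eq_zero_iff_of_nonneg
      (fun j _ => mul_nonneg (hxn j) (le_of_lt (hDpos j)))).mp hsum0 j (Finset.mem_univ j)
    have hD0 := hDpos j
    rcases neg_one_pow_eq_or ℝ (j : ℕ) with ha | ha <;> rcases hs' with hss | hss <;>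
      rw [ha, hss] at h0 <;> nlinarith [hD0, h0]
  have hdetV : ((Matrix.of fun i k => u k i).submatrix (fun i => t (Fin.castSucc i)) id).det ≠ 0 := by
    have := hminor (fun i => t (Fin.castSucc i)) (ht.comp Fin.strictMono_castSucc)
    rcases he with rfl | rfl <;> intro hz <;> rw [hz] at this <;> simp at this
  have hmv : ((Matrix.of fun i k => u k i).submatrix (fun i => t (Fin.castSucc i)) id).mulVec c
      = 0 := by
    funext j
    simp only [Matrix.mulVec, dotProduct, Matrix.submatrix_apply, Matrix.of_apply,
      id_eq, Pi.zero_apply]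
    rw [← hterm (Fin.castSucc j), hxval]
    exact Finset.sum_congr rfl fun i _ => mul_comm _ _
  exact hc (eq_zero_of_mulVec_eq_zero hdetV hmv)

lemma sum_smul_apply {n m : ℕ} (u : Fin m → Fin n → ℝ) (c : Fin m → ℝ) (p : Fin n) :
    (∑ i, c i • u i) p = ∑ i, c i * u i p := by
  simp [Finset.sum_apply]

lemma minor_ne_zero {n m : ℕ} (hm : m + 1 < n) (u : Fin (m + 1) → Fin n → ℝ)
    (H : ∀ c : Fin (m + 1) → ℝ, c ≠ 0 → sPlus (∑ i, c i • u i) ≤ m)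
    (α : Fin (m + 1) → Fin n) (hα : StrictMono α) :
    ((Matrix.of fun i k => u k i).submatrix α id).det ≠ 0 := by
  intro hdet
  obtain ⟨c, hc, hmv⟩ := Matrix.exists_mulVec_eq_zero_iff.mpr hdet
  set x := ∑ i, c i • u i with hx
  have hzero : ∀ j, x (α j) = 0 := by
    intro j
    have h1 := congrFun hmv j
    simp only [Matrix.mulVec, dotProduct, Matrix.submatrix_apply, Matrix.of_apply,
      id_eq, Pi.zero_apply] at h1
    rw [hx, sum_smul_apply, ← h1]
    exact Finset.sum_congr rfl fun i _ => mul_comm _ _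
  have hns : ¬ Function.Surjective α := by
    intro hs
    have := Fintype.card_le_of_surjective α hs
    simp at this
    omega
  rw [Function.Surjective] at hns
  push_neg at hns
  obtain ⟨p, hp⟩ := hns
  set S : Finset (Fin n) := insert p (Finset.image α Finset.univ) with hS
  have hpni : p ∉ Finset.image α Finset.univ := by
    simp only [Finset.mem_image, Finset.mem_univ, true_and]
    intro ⟨a, ha⟩
    exact hp a ha
  have hcard : S.card = m + 2 := by
    rw [hS, Finset.card_insert_of_notMem hpni,
      Finset.card_image_of_injective _ hα.injective]
    simp
  set t := S.orderEmbOfFin hcard with ht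
  have hts : StrictMono ⇑t := (S.orderEmbOfFin hcard).strictMono
  have hpmem : p ∈ S := Finset.mem_insert_self _ _
  obtain ⟨j₀, hj₀⟩ : ∃ j₀, t j₀ = p := by
    have hr := Finset.range_orderEmbOfFin S hcard
    have : p ∈ Set.range ⇑(S.orderEmbOfFin hcard) := by rw [hr]; exact hpmem
    exact this
  set σ : ℝ := if 0 < (-1 : ℝ) ^ (j₀ : ℕ) * x p then 1 else -1 with hσ
  have hσ' : σ = 1 ∨ σ = -1 := by rw [hσ]; split_ifs <;> simp
  have hclaim : ∀ j : Fin (m + 2), x (t j) = 0 ∨ 0 < (-1) ^ (j : ℕ) * σ * x (t j) := by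
    intro j
    by_cases hxj : x (t j) = 0
    · exact Or.inl hxj
    · right
      have htj : (t j : Fin n) ∈ S := by
        have hr := Finset.range_orderEmbOfFin S hcard
        have : t j ∈ Set.range ⇑(S.orderEmbOfFin hcard) := ⟨j, rfl⟩
        rw [hr] at this
        exact this
      have htjp : t j = p := by
        rcases Finset.mem_insert.mp htj with h | h
        · exact h
        · obtain ⟨a, -, ha⟩ := Finset.mem_image.mp h
          exact absurd (ha ▸ hzero a) hxj
      have hjj₀ : j = j₀ := hts.injective (htjp.trans hj₀.symm)
      subst hjj₀
      rw [htjp]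
      rw [htjp] at hxj
      by_cases hpos : 0 < (-1 : ℝ) ^ (j : ℕ) * x p
      · rw [hσ, if_pos hpos]
        nlinarith
      · have hne : (-1 : ℝ) ^ (j : ℕ) * x p ≠ 0 := by
          rcases neg_one_pow_eq_or ℝ (j : ℕ) with h | h <;> rw [h] <;>
            simpa using hxj
        have : (-1 : ℝ) ^ (j : ℕ) * x p < 0 := lt_of_le_of_ne (not_lt.mp hpos) hne
        rw [hσ, if_neg hpos]
        nlinarith
  have hkey := gadget x (⇑t) hts σ hσ' hclaim
  have hle := H c hc
  rw [← hx] at hle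
  omega

lemma pair_product_pos {n m : ℕ} (hm : m + 1 < n) (u : Fin (m + 1) → Fin n → ℝ)
    (H : ∀ c : Fin (m + 1) → ℝ, c ≠ 0 → sPlus (∑ i, c i • u i) ≤ m)
    (T : Finset (Fin n)) (hT : T.card = m + 2) (j k : Fin (m + 2)) (hjk : j ≠ k) :
    0 < ((Matrix.of fun i k' => u k' i).submatrix
          (fun i => T.orderEmbOfFin hT (j.succAbove i)) id).det *
        ((Matrix.of fun i k' => u k' i).submatrix
          (fun i => T.orderEmbOfFin hT (k.succAbove i)) id).det := by
  set τ := ⇑(T.orderEmbOfFin hT) with hτdef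
  have hτ : StrictMono τ := (T.orderEmbOfFin hT).strictMono
  set Dj := ((Matrix.of fun i k' => u k' i).submatrix (fun i => τ (j.succAbove i)) id).det
    with hDjd
  set Dk := ((Matrix.of fun i k' => u k' i).submatrix (fun i => τ (k.succAbove i)) id).det
    with hDkd
  have hDj0 : Dj ≠ 0 := minor_ne_zero hm u H _ (hτ.comp (Fin.strictMono_succAbove j))
  have hDk0 : Dk ≠ 0 := minor_ne_zero hm u H _ (hτ.comp (Fin.strictMono_succAbove k))
  obtain ⟨k', hk'⟩ := Fin.exists_succAbove_eq (show k ≠ j from hjk.symm)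
  set δ : Fin m → Fin (m + 2) := fun r => j.succAbove (k'.succAbove r) with hδ
  set B : Matrix (Fin (m + 1)) (Fin (m + 1)) ℝ :=
    fun r i => if hr : (r : ℕ) < m then u i (τ (δ ⟨(r : ℕ), hr⟩)) else 0 with hB
  have hdetB : B.det = 0 := by
    apply Matrix.det_eq_zero_of_row_eq_zero ⟨m, by omega⟩
    intro i
    simp [hB]
  obtain ⟨c, hc, hmv⟩ := Matrix.exists_mulVec_eq_zero_iff.mpr hdetB
  set x := ∑ i, c i • u i with hx
  have hzero : ∀ r : Fin m, x (τ (δ r)) = 0 := by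
    intro r
    have h1 := congrFun hmv (Fin.castSucc r)
    have hrlt : ((Fin.castSucc r : Fin (m + 1)) : ℕ) < m := by simp [r.2]
    simp only [Matrix.mulVec, dotProduct, hB, Pi.zero_apply, dif_pos hrlt] at h1
    rw [hx, sum_smul_apply, ← h1]
    exact Finset.sum_congr rfl fun i _ => mul_comm _ _
  have hz2 : ∀ i : Fin (m + 2), i ≠ j → i ≠ k → x (τ i) = 0 := by
    intro i hij hik
    obtain ⟨i', hi'⟩ := Fin.exists_succAbove_eq hij
    have hi'k' : i' ≠ k' := by
      intro h
      rw [h, hk'] at hi'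
      exact hik hi'.symm
    obtain ⟨r, hr⟩ := Fin.exists_succAbove_eq hi'k'
    have : δ r = i := by rw [hδ]; simp only; rw [hr, hi']
    rw [← this]
    exact hzero r
  set yj := x (τ j) with hyjd
  set yk := x (τ k) with hykd
  have hyj0 : yj ≠ 0 := by
    intro h0
    have hall : ∀ i, x (τ (k.succAbove i)) = 0 := by
      intro i
      by_cases hij : k.succAbove i = j
      · rw [hij]; exact h0
      · exact hz2 _ hij (Fin.succAbove_ne k i)
    apply hc
    apply eq_zero_of_mulVec_eq_zero hDk0
    funext r
    simp only [Matrix.mulVec, dotProduct, Matrix.submatrix_apply, Matrix.of_apply,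
      id_eq, Pi.zero_apply]
    rw [← hall r, hx, sum_smul_apply]
    exact Finset.sum_congr rfl fun i _ => mul_comm _ _
  have hyk0 : yk ≠ 0 := by
    intro h0
    have hall : ∀ i, x (τ (j.succAbove i)) = 0 := by
      intro i
      by_cases hik : j.succAbove i = k
      · rw [hik]; exact h0
      · exact hz2 _ (Fin.succAbove_ne j i) hik
    apply hc
    apply eq_zero_of_mulVec_eq_zero hDj0
    funext r
    simp only [Matrix.mulVec, dotProduct, Matrix.submatrix_apply, Matrix.of_apply,
      id_eq, Pi.zero_apply]
    rw [← hall r, hx, sum_smul_apply]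
    exact Finset.sum_congr rfl fun i _ => mul_comm _ _
  set pj : ℝ := (-1) ^ (j : ℕ) with hpj
  set pk : ℝ := (-1) ^ (k : ℕ) with hpk
  have hpj2 : pj * pj = 1 := by
    rcases neg_one_pow_eq_or ℝ (j : ℕ) with h | h <;> rw [hpj, h] <;> norm_num
  have hS : pj * pk * yj * yk < 0 := by
    by_contra hge
    push_neg at hge
    have hne : pj * pk * yj * yk ≠ 0 := by
      have h1 : pj ≠ 0 := by rcases neg_one_pow_eq_or ℝ (j : ℕ) with h | h <;> rw [hpj, h] <;>
        norm_num
      have h2 : pk ≠ 0 := by rcases neg_one_pow_eq_or ℝ (k : ℕ) with h | h <;> rw [hpk, h] <;>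
        norm_num
      exact mul_ne_zero (mul_ne_zero (mul_ne_zero h1 h2) hyj0) hyk0
    have hgt : 0 < pj * pk * yj * yk := lt_of_le_of_ne hge (Ne.symm hne)
    set σ : ℝ := if 0 < pj * yj then 1 else -1 with hσ
    have hσ' : σ = 1 ∨ σ = -1 := by rw [hσ]; split_ifs <;> simp
    have hσpos : 0 < σ * (pj * yj) := by
      rw [hσ]
      split_ifs with hcase
      · rw [one_mul]; exact hcase
      · have : pj * yj ≠ 0 := fun h => by
          rcases mul_eq_zero.mp h with h | h
          · rcases neg_one_pow_eq_or ℝ (j : ℕ) with hh | hh <;> rw [hpj, hh] at h <;> norm_num at h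
          · exact hyj0 h
        have : pj * yj < 0 := lt_of_le_of_ne (not_lt.mp hcase) this
        nlinarith
    have hclaim : ∀ i : Fin (m + 2), x (τ i) = 0 ∨ 0 < (-1) ^ (i : ℕ) * σ * x (τ i) := by
      intro i
      by_cases hij : i = j
      · subst hij
        right
        rw [← hpj, ← hyjd]
        nlinarith
      · by_cases hik : i = k
        · subst hik
          right
          rw [← hpk, ← hykd]
          have h6 : 0 < σ * (pj * yj) * (pj * pk * yj * yk) := mul_pos hσpos hgt
          have h7 : σ * (pj * yj) * (pj * pk * yj * yk) = σ * pk * yk * (yj * yj) := by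
            linear_combination (σ * pk * yj * yj * yk) * hpj2
          rw [h7] at h6
          nlinarith [h6, mul_self_pos.mpr hyj0]
        · exact Or.inl (hz2 i hij hik)
    have hkey := gadget x τ hτ σ hσ' hclaim
    have hle := H c hc
    rw [← hx] at hle
    omega
  have hiden : pj * yj * Dj + pk * yk * Dk = 0 := by
    have hdi := det_identity u c τ
    have hvan : ∀ i ∈ Finset.univ, i ∉ ({j, k} : Finset (Fin (m + 2))) →
        (-1 : ℝ) ^ (i : ℕ) * (∑ i', c i' * u i' (τ i)) *
          ((Matrix.of fun i' k'' => u k'' i').submatrix (fun i'' => τ (i.succAbove i'')) id).det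
          = 0 := by
      intro i _ hnm
      simp only [Finset.mem_insert, Finset.mem_singleton] at hnm
      push_neg at hnm
      have := hz2 i hnm.1 hnm.2
      rw [hx, sum_smul_apply] at this
      rw [this]
      ring
    rw [← Finset.sum_subset (Finset.subset_univ ({j, k} : Finset (Fin (m + 2)))) hvan] at hdi
    rw [Finset.sum_pair hjk] at hdi
    rw [← hdi]
    simp only [hpj, hpk, hyjd, hykd, hDjd, hDkd, hx, sum_smul_apply]
  have e2 : yj * yj * (Dj * Dk) = -(pj * pk * yj * yk) * (Dk * Dk) := by
    linear_combination (pj * yj * Dk) * hiden - (yj * yj * (Dj * Dk)) * hpj2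
  have e3 : 0 < yj * yj * (Dj * Dk) := by
    rw [e2]
    exact mul_pos (by linarith) (mul_self_pos.mpr hDk0)
  nlinarith [e3, mul_self_pos.mpr hyj0]

lemma erase_orderEmbOfFin {n m : ℕ} (T : Finset (Fin n)) (hT : T.card = m + 2)
    (j : Fin (m + 2))
    (h' : (T.erase (T.orderEmbOfFin hT j)).card = m + 1) :
    ⇑((T.erase (T.orderEmbOfFin hT j)).orderEmbOfFin h') =
      fun i => T.orderEmbOfFin hT (j.succAbove i) := by
  refine (Finset.orderEmbOfFin_unique h' ?_ ?_).symm
  · intro i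
    apply Finset.mem_erase.mpr
    constructor
    · exact fun h => Fin.succAbove_ne j i ((T.orderEmbOfFin hT).injective h)
    · exact Finset.orderEmbOfFin_mem T hT _
  · exact (T.orderEmbOfFin hT).strictMono.comp (Fin.strictMono_succAbove j)

lemma pair_product_pos' {n m : ℕ} (hm : m + 1 < n) (u : Fin (m + 1) → Fin n → ℝ)
    (H : ∀ c : Fin (m + 1) → ℝ, c ≠ 0 → sPlus (∑ i, c i • u i) ≤ m)
    (T : Finset (Fin n)) (hT : T.card = m + 2) (a b : Fin n) (ha : a ∈ T) (hb : b ∈ T)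
    (hab : a ≠ b) (h1 : (T.erase a).card = m + 1) (h2 : (T.erase b).card = m + 1) :
    0 < ((Matrix.of fun i k' => u k' i).submatrix (⇑((T.erase a).orderEmbOfFin h1)) id).det *
        ((Matrix.of fun i k' => u k' i).submatrix (⇑((T.erase b).orderEmbOfFin h2)) id).det := by
  obtain ⟨j, hj⟩ : ∃ j, T.orderEmbOfFin hT j = a := by
    have hr := Finset.range_orderEmbOfFin T hT
    have : a ∈ Set.range ⇑(T.orderEmbOfFin hT) := by rw [hr]; exact ha
    exact this
  obtain ⟨k, hk⟩ : ∃ k, T.orderEmbOfFin hT k = b := by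
    have hr := Finset.range_orderEmbOfFin T hT
    have : b ∈ Set.range ⇑(T.orderEmbOfFin hT) := by rw [hr]; exact hb
    exact this
  have hjk : j ≠ k := fun h => hab (by rw [← hj, ← hk, h])
  subst hj
  subst hk
  rw [erase_orderEmbOfFin T hT j h1, erase_orderEmbOfFin T hT k h2]
  exact pair_product_pos hm u H T hT j k hjk

lemma connect {n m : ℕ} (hm : m + 1 < n) (u : Fin (m + 1) → Fin n → ℝ)
    (H : ∀ c : Fin (m + 1) → ℝ, c ≠ 0 → sPlus (∑ i, c i • u i) ≤ m) :
    ∀ (l : ℕ) (S T : Finset (Fin n)) (hS : S.card = m + 1) (hT : T.card = m + 1),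
      (S \ T).card ≤ l →
      0 < ((Matrix.of fun i k' => u k' i).submatrix (⇑(S.orderEmbOfFin hS)) id).det *
          ((Matrix.of fun i k' => u k' i).submatrix (⇑(T.orderEmbOfFin hT)) id).det := by
  intro l
  induction l with
  | zero =>
    intro S T hS hT hcard
    have hsub : S ⊆ T := by
      rw [← Finset.sdiff_eq_empty_iff_subset]
      exact Finset.card_eq_zero.mp (Nat.le_zero.mp hcard)
    have hST : S = T := Finset.eq_of_subset_of_card_le hsub (by omega)
    subst hST
    exact mul_self_pos.mpr (minor_ne_zero hm u H _ (S.orderEmbOfFin hS).strictMono)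
  | succ l ih =>
    intro S T hS hT hcard
    by_cases hST : S = T
    · subst hST
      exact mul_self_pos.mpr (minor_ne_zero hm u H _ (S.orderEmbOfFin hS).strictMono)
    · have hSTne : (S \ T).Nonempty := by
        rw [Finset.sdiff_nonempty]
        intro hsub
        exact hST (Finset.eq_of_subset_of_card_le hsub (by omega))
      have hTSne : (T \ S).Nonempty := by
        rw [Finset.sdiff_nonempty]
        intro hsub
        exact hST (Finset.eq_of_subset_of_card_le hsub (by omega)).symm
      obtain ⟨a, haST⟩ := hSTne
      obtain ⟨b, hbTS⟩ := hTSne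
      have haS : a ∈ S := (Finset.mem_sdiff.mp haST).1
      have haT : a ∉ T := (Finset.mem_sdiff.mp haST).2
      have hbT : b ∈ T := (Finset.mem_sdiff.mp hbTS).1
      have hbS : b ∉ S := (Finset.mem_sdiff.mp hbTS).2
      have hab : a ≠ b := fun h => hbS (h ▸ haS)
      set S' : Finset (Fin n) := insert b (S.erase a) with hS'def
      have hS' : S'.card = m + 1 := by
        rw [hS'def, Finset.card_insert_of_notMem (fun h => hbS (Finset.mem_of_mem_erase h)),
          Finset.card_erase_of_mem haS, hS]
        omega
      set T₂ : Finset (Fin n) := insert b S with hT₂def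
      have hT₂ : T₂.card = m + 2 := by
        rw [hT₂def, Finset.card_insert_of_notMem hbS, hS]
      have haT₂ : a ∈ T₂ := Finset.mem_insert_of_mem haS
      have hbT₂ : b ∈ T₂ := Finset.mem_insert_self _ _
      have heb : T₂.erase b = S := by rw [hT₂def]; exact Finset.erase_insert hbS
      have hea : T₂.erase a = S' := by
        rw [hT₂def, hS'def]
        exact Finset.erase_insert_of_ne (fun h => hab h.symm)
      have hcount : (S' \ T).card ≤ l := by
        have hsub : S' \ T ⊆ (S \ T).erase a := by
          intro z hz
          rw [Finset.mem_sdiff, hS'def, Finset.mem_insert] at hz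
          rcases hz.1 with rfl | hz1
          · exact absurd hbT hz.2
          · exact Finset.mem_erase.mpr ⟨(Finset.mem_erase.mp hz1).1,
              Finset.mem_sdiff.mpr ⟨(Finset.mem_erase.mp hz1).2, hz.2⟩⟩
        calc (S' \ T).card ≤ ((S \ T).erase a).card := Finset.card_le_card hsub
          _ = (S \ T).card - 1 := Finset.card_erase_of_mem haST
          _ ≤ l := by omega
      have hea' : (T₂.erase a).card = m + 1 := by rw [hea]; exact hS'
      have heb' : (T₂.erase b).card = m + 1 := by rw [heb]; exact hS
      have step1 := pair_product_pos' hm u H T₂ hT₂ a b haT₂ hbT₂ hab hea' heb'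
      have step2 := ih S' T hS' hT hcount
      have eqbf : ⇑(S.orderEmbOfFin hS) = ⇑((T₂.erase b).orderEmbOfFin heb') :=
        Finset.orderEmbOfFin_unique heb'
          (fun i => by rw [heb]; exact Finset.orderEmbOfFin_mem S hS i)
          (S.orderEmbOfFin hS).strictMono
      have eqaf : ⇑(S'.orderEmbOfFin hS') = ⇑((T₂.erase a).orderEmbOfFin hea') :=
        Finset.orderEmbOfFin_unique hea'
          (fun i => by rw [hea]; exact Finset.orderEmbOfFin_mem S' hS' i)
          (S'.orderEmbOfFin hS').strictMono
      rw [← eqaf, ← eqbf] at step1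
      have hS'ne := minor_ne_zero hm u H _ (S'.orderEmbOfFin hS').strictMono
      nlinarith [mul_pos step1 step2, mul_self_pos.mpr hS'ne]

lemma forward_lemma {n m : ℕ} (hm : m + 1 < n) (u : Fin (m + 1) → Fin n → ℝ)
    (H : ∀ c : Fin (m + 1) → ℝ, c ≠ 0 → sPlus (∑ i, c i • u i) ≤ m) :
    SSRof (Matrix.of fun i j => u j i) (m + 1) := by
  have key : ∀ (α β : Fin (m + 1) → Fin n), StrictMono α → StrictMono β →
      0 < ((Matrix.of fun i j => u j i).submatrix α id).det *
          ((Matrix.of fun i j => u j i).submatrix β id).det := by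
    intro α β hα hβ
    have hS : (Finset.image α Finset.univ).card = m + 1 := by
      rw [Finset.card_image_of_injective _ hα.injective]
      simp
    have hT : (Finset.image β Finset.univ).card = m + 1 := by
      rw [Finset.card_image_of_injective _ hβ.injective]
      simp
    have eα : ⇑((Finset.image α Finset.univ).orderEmbOfFin hS) = α :=
      (Finset.orderEmbOfFin_unique hS
        (fun i => Finset.mem_image_of_mem α (Finset.mem_univ i)) hα).symm
    have eβ : ⇑((Finset.image β Finset.univ).orderEmbOfFin hT) = β :=
      (Finset.orderEmbOfFin_unique hT
        (fun i => Finset.mem_image_of_mem β (Finset.mem_univ i)) hβ).symm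
    have hcard : ((Finset.image α Finset.univ) \ (Finset.image β Finset.univ)).card ≤ m + 1 := by
      calc _ ≤ (Finset.image α Finset.univ).card :=
            Finset.card_le_card (Finset.sdiff_subset)
        _ = m + 1 := hS
    have := connect hm u H (m + 1) _ _ hS hT hcard
    rw [eα, eβ] at this
    exact this
  have hα₀ : StrictMono (Fin.castLE (show m + 1 ≤ n by omega)) :=
    Fin.strictMono_castLE _
  by_cases hpos :
      0 < ((Matrix.of fun i j => u j i).submatrix (Fin.castLE (show m + 1 ≤ n by omega)) id).det
  · refine Or.inl fun α β hα hβ => ?_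
    rw [strictMono_fin_eq_id hβ]
    have h2 := key α _ hα hα₀
    nlinarith
  · have hne := minor_ne_zero hm u H _ hα₀
    have hneg :
        ((Matrix.of fun i j => u j i).submatrix (Fin.castLE (show m + 1 ≤ n by omega)) id).det
          < 0 := lt_of_le_of_ne (not_lt.mp hpos) hne
    refine Or.inr fun α β hα hβ => ?_
    rw [strictMono_fin_eq_id hβ]
    have h2 := key α _ hα hα₀
    nlinarith


/-- For `u¹,…,uᵐ ∈ ℝⁿ` with `m < n` and `U` the matrix with these
columns, the following are equivalent: (1) `s⁺(∑ cᵢ uⁱ) ≤ m - 1` whenever the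
`cᵢ` are not all zero; (2) all `m×m` minors of `U` are nonzero and have the
same sign (`U` is `SSR_m`). -/
theorem sPlus_bound_iff_SSR (n m : ℕ) (hm : m < n) (u : Fin m → Fin n → ℝ) :
    (∀ c : Fin m → ℝ, c ≠ 0 → sPlus (∑ i, c i • u i) ≤ m - 1) ↔
      SSRof (Matrix.of fun i j => u j i) m := by
  cases m with
  | zero =>
    constructor
    · intro _
      refine Or.inl fun α β _ _ => ?_
      rw [Matrix.det_fin_zero]
      norm_num
    · intro _ c hc
      exact absurd (funext fun i => i.elim0) hc
  | succ m =>
    constructor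
    · intro H
      apply forward_lemma (by omega) u
      intro c hc
      have := H c hc
      simpa using this
    · intro hssr c hc
      have hres : sPlus (∑ i, c i • u i) ≤ m := by
        rcases hssr with hp | hn
        · exact backward_lemma u 1 (Or.inl rfl)
            (fun α hα => by rw [one_mul]; exact hp α id hα strictMono_id) c hc
        · exact backward_lemma u (-1) (Or.inr rfl)
            (fun α hα => by have := hn α id hα strictMono_id; nlinarith) c hc
      simpa using hres
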